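/- Distinct faces of a discrete plane have disjoint images under a generalized substitution: if [x,i]* and [x',i']* are distinct faces of the discrete plane P_v (v with positive coordinates), then the sets of faces E₁*(σ)([x,i]*) and E₁*(σ)([x',i']*) are disjoint, where σ is a unimodular substitution with incidence matrix M and Mᵀv has positive coordinates. -/

import Mathlib

abbrev Face := (Fin 3 → ℤ) × Fin 3

def abel (s : List (Fin 3)) : Fin 3 → ℤ := fun i => s.count i

def incidence (σ : Fin 3 → List (Fin 3)) : Matrix (Fin 3) (Fin 3) ℤ :=
  fun i j => (σ j).count i

def E1star (σ : Fin 3 → List (Fin 3)) (f : Face) : Set Face :=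
  { g | ∃ (j : Fin 3) (p s : List (Fin 3)),
      σ j = p ++ f.2 :: s ∧ g = ((incidence σ)⁻¹.mulVec (f.1 + abel s), j) }

open Finset in
def dotIR (x : Fin 3 → ℤ) (v : Fin 3 → ℝ) : ℝ := ∑ k, (x k : ℝ) * v k

def discretePlane (v : Fin 3 → ℝ) : Set Face :=
  { f | 0 ≤ dotIR f.1 v ∧ dotIR f.1 v < v f.2 }

/-- Splitting a list two ways around distinguished elements. -/
lemma list_split_eq {α : Type*} : ∀ (p : List α) (a : α) (s p' : List α) (a' : α) (s' : List α),
    p ++ a :: s = p' ++ a' :: s' →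
    (a = a' ∧ s = s') ∨ (∃ q, s = q ++ a' :: s') ∨ (∃ q, s' = q ++ a :: s) := by
  intro p
  induction p with
  | nil =>
    intro a s p' a' s' h
    cases p' with
    | nil => simp_all
    | cons b t =>
      simp only [List.nil_append, List.cons_append, List.cons.injEq] at h
      exact Or.inr (Or.inl ⟨t, h.2⟩)
  | cons b t ih =>
    intro a s p' a' s' h
    cases p' with
    | nil =>
      simp only [List.cons_append, List.nil_append, List.cons.injEq] at h
      exact Or.inr (Or.inr ⟨t, h.2.symm⟩)
    | cons c u =>
      simp only [List.cons_append, List.cons.injEq] at h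
      exact ih a s u a' s' h.2

lemma dotIR_add (x y : Fin 3 → ℤ) (v : Fin 3 → ℝ) :
    dotIR (x + y) v = dotIR x v + dotIR y v := by
  simp [dotIR, add_mul, Finset.sum_add_distrib]

lemma dotIR_abel_nonneg (s : List (Fin 3)) (v : Fin 3 → ℝ) (hv : ∀ k, 0 < v k) :
    0 ≤ dotIR (abel s) v := by
  apply Finset.sum_nonneg
  intro k _
  exact mul_nonneg (by simp [abel]) (hv k).le

lemma abel_append (q r : List (Fin 3)) : abel (q ++ r) = abel q + abel r := by
  funext k; simp [abel, List.count_append]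

lemma dotIR_abel_single (a : Fin 3) (v : Fin 3 → ℝ) : dotIR (abel [a]) v = v a := by
  have : ∀ k, ((abel [a] k : ℤ) : ℝ) = if k = a then 1 else 0 := by
    intro k
    by_cases h : k = a
    · simp [abel, List.count_cons, h]
    · simp [abel, List.count_cons, h, Ne.symm h]
  simp only [dotIR, this]
  simp

open Finset in
/-- Distinct faces of a discrete plane have disjoint images under a generalized
substitution. -/
theorem E1star_disjoint_on_discretePlane (σ : Fin 3 → List (Fin 3))
    (hσ : IsUnit (incidence σ).det)
    (v : Fin 3 → ℝ) (hv : ∀ k, 0 < v k)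
    (hMv : ∀ i, 0 < ∑ k, ((incidence σ) k i : ℝ) * v k)
    (f f' : Face) (hf : f ∈ discretePlane v) (hf' : f' ∈ discretePlane v)
    (hne : f ≠ f') :
    Disjoint (E1star σ f) (E1star σ f') := by
  rw [Set.disjoint_left]
  rintro g ⟨j, p, s, hspl, rfl⟩ ⟨j', p', s', hspl', heq⟩
  have hj : j = j' := congrArg Prod.snd heq
  subst hj
  have hvec : (incidence σ)⁻¹.mulVec (f.1 + abel s)
      = (incidence σ)⁻¹.mulVec (f'.1 + abel s') := congrArg Prod.fst heq
  have hcancel : f.1 + abel s = f'.1 + abel s' := by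
    have h1 := congrArg (fun w => (incidence σ).mulVec w) hvec
    simpa [Matrix.mulVec_mulVec, Matrix.mul_nonsing_inv _ hσ] using h1
  have hlist : p ++ f.2 :: s = p' ++ f'.2 :: s' := hspl.symm.trans hspl'
  -- helper to derive a contradiction from the "strict suffix" case
  have key : ∀ (a b : Face) (q t : List (Fin 3)),
      a ∈ discretePlane v → b ∈ discretePlane v →
      a.1 + abel (q ++ b.2 :: t) = b.1 + abel t → False := by
    intro a b q t ha hb habel
    have hb1 : b.1 = a.1 + abel q + abel [b.2] := by
      funext k
      have := congrFun habel k
      simp only [abel_append, Pi.add_apply] at this ⊢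
      have hc : abel (b.2 :: t) k = abel [b.2] k + abel t k := by
        simp [abel, List.count_cons]; ring
      omega
    have hdb : dotIR b.1 v = dotIR a.1 v + dotIR (abel q) v + v b.2 := by
      rw [hb1, dotIR_add, dotIR_add, dotIR_abel_single]
    have := ha.1
    have := dotIR_abel_nonneg q v hv
    have := hb.2
    linarith
  rcases list_split_eq p f.2 s p' f'.2 s' hlist with ⟨hi, hs⟩ | ⟨q, hq⟩ | ⟨q, hq⟩
  · subst hs
    have hx : f.1 = f'.1 := by
      funext k; have := congrFun hcancel k; simp at this; omega
    exact hne (Prod.ext hx hi)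
  · subst hq
    exact key f f' q s' hf hf' hcancel
  · -- symmetric: s' = q ++ f.2 :: s
    have hcancel' : f'.1 + abel (q ++ f.2 :: s) = f.1 + abel s := by
      rw [← hq]; exact hcancel.symm
    exact key f' f q s hf' hf hcancel'
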